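/- arXiv:2503.01141 — 2 statements merged into one kernel-verified Lean document; each statement's English description precedes it below -/
import Mathlib

section
/- (Theorem 1, accuracy formula.) For every total token budget B ∈ ℕ, the optimal number of correctly answered questions under budget B is given by the greedy closed form A*(B) = max { k : k ≤ L.length and (L.take k).sum ≤ B }, i.e. it equals the largest k such that the sum of the k smallest finite token complexities is at most B. -/
/-- There are `n` questions with token complexities `τ : Fin n → ℕ∞`
(`τ i = ⊤` means question `i` is unsolvable at any response length).
Under the token complexity hypothesis, an allocation of response lengths
`t : Fin n → ℕ` answers question `i` correctly iff `τ i ≤ (t i : ℕ∞)`.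
`Astar n τ B` is the maximum number of correctly answered questions over
all allocations with total length at most `B`. -/
noncomputable def Astar (n : ℕ) (τ : Fin n → ℕ∞) (B : ℕ) : ℕ :=
  sSup { c : ℕ | ∃ t : Fin n → ℕ, (∑ i, t i) ≤ B ∧
    (Finset.univ.filter (fun i => τ i ≤ (t i : ℕ∞))).card = c }

/-- `Tstar n τ m` is the minimum total token budget `∑ i, t i` over all
allocations `t : Fin n → ℕ` answering at least `m` questions correctly. -/
noncomputable def Tstar (n : ℕ) (τ : Fin n → ℕ∞) (m : ℕ) : ℕ :=
  sInf { s : ℕ | ∃ t : Fin n → ℕ,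
    m ≤ (Finset.univ.filter (fun i => τ i ≤ (t i : ℕ∞))).card ∧ (∑ i, t i) = s }

/-- `sortedL n τ` is the list of the values `(τ i).toNat` over all indices `i`
with `τ i < ⊤`, sorted in increasing order. -/
def sortedL (n : ℕ) (τ : Fin n → ℕ∞) : List ℕ :=
  Multiset.sort
    (Multiset.map (fun i => (τ i).toNat) (Finset.univ.filter (fun i => τ i < ⊤)).val) (· ≤ ·)

lemma take_sum_le_of_sublist : ∀ {l l' : List ℕ}, l.Pairwise (· ≤ ·) → l'.Sublist l →
    (l.take l'.length).sum ≤ l'.sum := by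
  intro l
  induction l with
  | nil => intro l' _ h; simp [List.sublist_nil.mp h]
  | cons a l ih =>
    intro l' hs h
    obtain ⟨ha, hsl⟩ := List.pairwise_cons.mp hs
    cases h with
    | cons _ h =>
      -- l' <+ l
      match l' with
      | [] => simp
      | b :: rest =>
        have hb : b ∈ l := h.subset List.mem_cons_self
        have hrest : rest.Sublist l := (List.sublist_cons_self b rest).trans h
        simp only [List.length_cons, List.take_succ_cons, List.sum_cons]
        exact add_le_add (ha b hb) (ih hsl hrest)
    | cons_cons _ h =>
      simp only [List.length_cons, List.take_succ_cons, List.sum_cons]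
      exact add_le_add le_rfl (ih hsl h)

/-- Theorem 1, accuracy formula: the optimal number of correctly answered
questions under budget `B` equals the largest `k` such that the sum of the
`k` smallest finite token complexities is at most `B`. -/
theorem astar_eq_greedy (n : ℕ) (τ : Fin n → ℕ∞) (B : ℕ) :
    Astar n τ B =
      sSup { k : ℕ | k ≤ (sortedL n τ).length ∧ ((sortedL n τ).take k).sum ≤ B } := by
  classical
  set f : Fin n → ℕ := fun i => (τ i).toNat with hf
  set F : Finset (Fin n) := Finset.univ.filter (fun i => τ i < ⊤) with hF
  set L : List ℕ := sortedL n τ with hL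
  have hLcoe : (↑L : Multiset ℕ) = F.val.map f := Multiset.sort_eq _ _
  have hLsorted : L.Pairwise (· ≤ ·) := Multiset.pairwise_sort _ _
  have hLlen : L.length = F.card := by
    have := congrArg Multiset.card hLcoe
    simpa using this
  -- the Astar set
  set SA : Set ℕ := { c : ℕ | ∃ t : Fin n → ℕ, (∑ i, t i) ≤ B ∧
    (Finset.univ.filter (fun i => τ i ≤ (t i : ℕ∞))).card = c } with hSA
  set SG : Set ℕ := { k : ℕ | k ≤ L.length ∧ (L.take k).sum ≤ B } with hSG
  have hSAne : SA.Nonempty := ⟨_, fun _ => 0, by simp, rfl⟩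
  have hSAbdd : BddAbove SA := by
    refine ⟨n, fun c hc => ?_⟩
    obtain ⟨t, _, hcard⟩ := hc
    rw [← hcard]
    exact le_trans (Finset.card_filter_le _ _) (by simp)
  have hSGne : SG.Nonempty := ⟨0, ⟨Nat.zero_le _, by simp⟩⟩
  have hSGbdd : BddAbove SG := ⟨L.length, fun k hk => hk.1⟩
  apply le_antisymm
  · -- Astar ≤ sSup SG
    have hmem : Astar n τ B ∈ SA := Nat.sSup_mem hSAne hSAbdd
    obtain ⟨t, htB, hcard⟩ := hmem
    set A : Finset (Fin n) := Finset.univ.filter (fun i => τ i ≤ (t i : ℕ∞)) with hA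
    have hAF : A ⊆ F := by
      intro i hi
      simp only [hA, hF, Finset.mem_filter, Finset.mem_univ, true_and] at hi ⊢
      exact lt_of_le_of_lt hi (by exact_mod_cast lt_top_iff_ne_top.mpr (by simp))
    have hmle : (A.val.map f : Multiset ℕ) ≤ F.val.map f :=
      Multiset.map_le_map (Finset.val_le_iff.mpr hAF)
    rw [← hLcoe, ← Multiset.coe_toList (A.val.map f), Multiset.coe_le] at hmle
    obtain ⟨l', hperm, hsubl⟩ := hmle
    have hlen : l'.length = A.card := by
      have := hperm.length_eq
      simpa using this
    have hsum1 : (L.take A.card).sum ≤ l'.sum := by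
      rw [← hlen]; exact take_sum_le_of_sublist hLsorted hsubl
    have hsum2 : l'.sum = (A.val.map f).sum := by
      rw [hperm.sum_eq]
      exact Multiset.sum_toList _
    have hsum3 : (A.val.map f).sum ≤ B := by
      have h1 : (A.val.map f).sum ≤ (A.val.map t).sum := by
        apply Multiset.sum_map_le_sum_map
        intro i hi
        have hiA : i ∈ A := hi
        have hit : τ i ≤ (t i : ℕ∞) := (Finset.mem_filter.mp hiA).2
        have hne : τ i ≠ ⊤ := fun h => by simp [h] at hit
        have h2 : ((τ i).toNat : ℕ∞) ≤ ↑(t i) := by rw [ENat.coe_toNat hne]; exact hit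
        exact_mod_cast h2
      have h2 : (A.val.map t).sum = ∑ i ∈ A, t i := rfl
      calc (A.val.map f).sum ≤ ∑ i ∈ A, t i := h1.trans_eq h2
        _ ≤ ∑ i, t i := Finset.sum_le_sum_of_subset (Finset.subset_univ A)
        _ ≤ B := htB
    refine le_csSup hSGbdd ?_
    rw [← hcard]
    constructor
    · rw [hLlen]; exact Finset.card_le_card hAF
    · exact hsum1.trans (hsum2 ▸ hsum3)
  · -- sSup SG ≤ Astar
    refine csSup_le hSGne fun k hk => ?_
    obtain ⟨hk1, hk2⟩ := hk
    -- construct allocation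
    have hsub : (L.take k).Subperm ((F.val.toList).map f) := by
      rw [← Multiset.coe_le]
      have h1 : (↑((F.val.toList).map f) : Multiset ℕ) = Multiset.map f F.val := by
        have h0 : (↑((F.val.toList).map f) : Multiset ℕ) = Multiset.map f ↑(F.val.toList) := rfl
        rw [h0, Multiset.coe_toList]
      rw [h1, ← hLcoe]
      exact Multiset.coe_le.mpr (List.take_sublist k L).subperm
    obtain ⟨u, hu_perm, hu_subl⟩ := hsub
    obtain ⟨v, hv_subl, hv_map⟩ := List.sublist_map_iff.mp hu_subl
    have hv_nodup : v.Nodup := hv_subl.nodup (by rw [← Multiset.coe_nodup, Multiset.coe_toList]; exact F.nodup)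
    have hv_memF : ∀ i ∈ v, i ∈ F := fun i hi => by
      have := hv_subl.subset hi
      simpa using this
    set S : Finset (Fin n) := ⟨↑v, hv_nodup⟩ with hS
    have hScard : S.card = k := by
      have h1 : v.length = u.length := by rw [hv_map]; simp
      have h2 : u.length = k := by
        rw [hu_perm.length_eq, List.length_take]
        exact min_eq_left hk1
      simp [hS, Finset.card, h1, h2]
    set t : Fin n → ℕ := fun i => if i ∈ S then f i else 0 with ht
    have hsum : ∑ i, t i = ∑ i ∈ S, f i := by
      rw [ht]
      simp [Finset.sum_ite_mem]
    have hsumS : ∑ i ∈ S, f i = (L.take k).sum := by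
      have : ∑ i ∈ S, f i = (v.map f).sum := by
        show (Multiset.map f (↑v : Multiset (Fin n))).sum = _
        rfl
      rw [this, ← hv_map]
      exact hu_perm.sum_eq
    have hcorrect : S ⊆ Finset.univ.filter (fun i => τ i ≤ (t i : ℕ∞)) := by
      intro i hi
      simp only [Finset.mem_filter, Finset.mem_univ, true_and]
      have hiF : i ∈ F := by
        have : i ∈ v := by simpa [hS, Finset.mem_def] using hi
        exact hv_memF i this
      have hne : τ i ≠ ⊤ := by
        simp only [hF, Finset.mem_filter] at hiF
        exact hiF.2.ne
      have : t i = f i := by rw [ht]; simp [hi]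
      rw [this, hf, ENat.coe_toNat hne]
    have hcmem : (Finset.univ.filter (fun i => τ i ≤ (t i : ℕ∞))).card ∈ SA := by
      refine ⟨t, ?_, rfl⟩
      rw [hsum, hsumS]; exact hk2
    calc k = S.card := hScard.symm
      _ ≤ (Finset.univ.filter (fun i => τ i ≤ (t i : ℕ∞))).card := Finset.card_le_card hcorrect
      _ ≤ Astar n τ B := le_csSup hSAbdd hcmem
end

section
/- (Theorem 1, minimal-budget formula.) For every m ∈ ℕ with m ≤ L.length (the number of solvable questions), the minimum total token budget required to answer at least m questions correctly equals the sum of the m smallest finite token complexities: T*(m) = (L.take m).sum, where T*(m) is the minimum of ∑ i, t i over all allocations t : Fin n → ℕ with card {i | τ i ≤ t i} ≥ m. -/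
/-- For a sorted list `l`, any sublist `l'` of `l` has sum at least the sum of
the first `l'.length` elements of `l`. -/
lemma take_sum_le_sublist_sum : ∀ (l l' : List ℕ), l.Pairwise (· ≤ ·) → l'.Sublist l →
    (l.take l'.length).sum ≤ l'.sum := by
  intro l
  induction l with
  | nil => intro l' _ h; simp [List.sublist_nil.mp h]
  | cons a l ih =>
    intro l' hs hsub
    cases hsub with
    | cons _ h =>
      -- l' is a sublist of l
      cases l' with
      | nil => simp
      | cons b rest =>
        have hb : b ∈ l := h.subset (List.mem_cons_self)
        have hab : a ≤ b := List.rel_of_pairwise_cons hs hb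
        have hrest : rest.Sublist l := (List.sublist_cons_self b rest).trans h
        have := ih rest hs.of_cons hrest
        simp only [List.length_cons, List.take_succ_cons, List.sum_cons]
        omega
    | cons_cons _ h =>
      rename_i l''
      have := ih l'' hs.of_cons h
      simp only [List.length_cons, List.take_succ_cons, List.sum_cons]
      omega

lemma sort_sublist_of_le {u s : Multiset ℕ} (h : u ≤ s) :
    (Multiset.sort u (· ≤ ·)).Sublist (Multiset.sort s (· ≤ ·)) := by
  have hle : ((Multiset.sort u (· ≤ ·) : List ℕ) : Multiset ℕ) ≤
      ((Multiset.sort s (· ≤ ·) : List ℕ) : Multiset ℕ) := by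
    rwa [Multiset.sort_eq, Multiset.sort_eq]
  exact List.sublist_of_subperm_of_pairwise (Multiset.coe_le.mp hle)
    (Multiset.pairwise_sort _ _) (Multiset.pairwise_sort _ _)

lemma exists_of_le_map {α β : Type*} {f : α → β} {u : Multiset β} {s : Multiset α}
    (h : u ≤ s.map f) : ∃ v ≤ s, v.map f = u := by
  induction u using Quotient.inductionOn with
  | h lu =>
    induction s using Quotient.inductionOn with
    | h ls =>
      have h' : (lu : Multiset β) ≤ ((ls.map f : List β) : Multiset β) := by
        simpa [Multiset.map_coe] using h
      obtain ⟨l₁, hperm, hsub⟩ := Multiset.coe_le.mp h'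
      obtain ⟨l₂, hl₂, rfl⟩ := List.sublist_map_iff.mp hsub
      refine ⟨(l₂ : Multiset α), ?_, ?_⟩
      · exact Multiset.coe_le.mpr hl₂.subperm
      · rw [Multiset.map_coe]
        exact Quot.sound hperm

/-- Theorem 1, minimal-budget formula: for `m` at most the number of solvable
questions, the minimum total budget to answer at least `m` questions correctly
equals the sum of the `m` smallest finite token complexities. -/
theorem tstar_eq_take_sum (n : ℕ) (τ : Fin n → ℕ∞) (m : ℕ)
    (hm : m ≤ (sortedL n τ).length) :
    Tstar n τ m = ((sortedL n τ).take m).sum := by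
  classical
  set f : Fin n → ℕ := fun i => (τ i).toNat with hf
  set F : Finset (Fin n) := Finset.univ.filter (fun i => τ i < ⊤) with hF
  set M : Multiset ℕ := Multiset.map f F.val with hM
  have hL : sortedL n τ = Multiset.sort M (· ≤ ·) := rfl
  -- the multiset of the first m elements is ≤ M
  have htake_le : ((sortedL n τ).take m : Multiset ℕ) ≤ M := by
    have h1 : ((sortedL n τ).take m : Multiset ℕ) ≤ (sortedL n τ : Multiset ℕ) :=
      Multiset.coe_le.mpr (List.take_sublist m _).subperm
    rwa [hL, Multiset.sort_eq] at h1
  obtain ⟨v, hvle, hvmap⟩ := exists_of_le_map htake_le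
  have hvnodup : v.Nodup := Multiset.nodup_of_le hvle F.nodup
  set S : Finset (Fin n) := ⟨v, hvnodup⟩ with hS
  have hSsub : S ⊆ F := Finset.val_le_iff.mp hvle
  have hSf : ∀ i ∈ S, τ i < ⊤ := fun i hi => (Finset.mem_filter.mp (hSsub hi)).2
  -- the witnessing allocation
  set t0 : Fin n → ℕ := fun i => if i ∈ S then f i else 0 with ht0
  have hsum0 : (∑ i, t0 i) = ((sortedL n τ).take m).sum := by
    have h1 : (∑ i, t0 i) = ∑ i ∈ S, f i := by
      rw [ht0, Finset.sum_ite_mem, Finset.univ_inter]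
    have h2 : (∑ i ∈ S, f i) = (Multiset.map f v).sum := rfl
    rw [h1, h2, hvmap, Multiset.sum_coe]
  have hans0 : m ≤ (Finset.univ.filter (fun i => τ i ≤ (t0 i : ℕ∞))).card := by
    have hSsub' : S ⊆ Finset.univ.filter (fun i => τ i ≤ (t0 i : ℕ∞)) := by
      intro i hi
      refine Finset.mem_filter.mpr ⟨Finset.mem_univ i, ?_⟩
      have : t0 i = f i := by rw [ht0]; simp [hi]
      rw [this, hf]
      exact le_of_eq (ENat.coe_toNat (hSf i hi).ne).symm
    have hcardS : S.card = m := by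
      have : S.card = Multiset.card v := rfl
      rw [this, ← Multiset.card_map f v, hvmap, Multiset.coe_card,
        List.length_take, min_eq_left hm]
    calc m = S.card := hcardS.symm
      _ ≤ _ := Finset.card_le_card hSsub'
  have hmem : ((sortedL n τ).take m).sum ∈ { s : ℕ | ∃ t : Fin n → ℕ,
      m ≤ (Finset.univ.filter (fun i => τ i ≤ (t i : ℕ∞))).card ∧ (∑ i, t i) = s } :=
    ⟨t0, hans0, hsum0⟩
  refine le_antisymm (Nat.sInf_le hmem) (le_csInf ⟨_, hmem⟩ ?_)
  rintro s ⟨t, hcard, rfl⟩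
  obtain ⟨S'', hS''sub, hS''card⟩ := Finset.exists_subset_card_eq hcard
  have hS''F : S'' ⊆ F := by
    intro i hi
    have hi' := Finset.mem_filter.mp (hS''sub hi)
    exact Finset.mem_filter.mpr ⟨hi'.1, lt_of_le_of_lt hi'.2 (by simp [lt_top_iff_ne_top])⟩
  set u : Multiset ℕ := S''.val.map f with hu
  have huM : u ≤ M := Multiset.map_le_map (Finset.val_le_iff.mpr hS''F)
  have hucard : Multiset.card u = m := by
    rw [hu, Multiset.card_map]; exact hS''card
  have hsorted_sub : (Multiset.sort u (· ≤ ·)).Sublist (sortedL n τ) := by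
    rw [hL]; exact sort_sublist_of_le huM
  have hlen : (Multiset.sort u (· ≤ ·)).length = m := by
    rw [Multiset.length_sort, hucard]
  have h1 : ((sortedL n τ).take m).sum ≤ (Multiset.sort u (· ≤ ·)).sum := by
    have := take_sum_le_sublist_sum (sortedL n τ) (Multiset.sort u (· ≤ ·))
      (by rw [hL]; exact Multiset.pairwise_sort _ _) hsorted_sub
    rwa [hlen] at this
  have h2 : (Multiset.sort u (· ≤ ·)).sum = ∑ i ∈ S'', f i := by
    have : ((Multiset.sort u (· ≤ ·) : List ℕ) : Multiset ℕ).sum = u.sum := by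
      rw [Multiset.sort_eq]
    rw [Multiset.sum_coe] at this
    rw [this, hu, Finset.sum]
  have h3 : ∀ i ∈ S'', f i ≤ t i := by
    intro i hi
    have hi' := (Finset.mem_filter.mp (hS''sub hi)).2
    have := ENat.toNat_le_toNat hi' (by simp)
    simpa using this
  calc ((sortedL n τ).take m).sum ≤ ∑ i ∈ S'', f i := by rw [← h2]; exact h1
    _ ≤ ∑ i ∈ S'', t i := Finset.sum_le_sum h3
    _ ≤ ∑ i, t i := Finset.sum_le_sum_of_subset (Finset.subset_univ S'')
end
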